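/- Let X_1,...,X_m be independent Bernoulli(p_i), W their sum, λ_1 = Σ p_i, q_i = 1-p_i, W_i = W - X_i. Define the operator B̂*g(w) = (n*p*q* + (1/2 - p*)(w - λ_1))Δg(w) - (w - λ_1)Θg(w), where n*p*q* = λ_1 - λ_2 and p* = (λ_2 - λ_3)/(λ_1 - λ_2), Δg(w) = g(w+1)-g(w), Θg(w) = (g(w+1)+g(w))/2. Then for any bounded g: ℤ → ℝ, E B̂*g(W) = Σ_{i=1}^m (p* - p_i) p_i² q_i E Δ³g(W_i). -/

import Mathlib

open MeasureTheory ProbabilityTheory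

noncomputable section AuxStein

/-- Forward difference operator. -/
def Dop (g : ℤ → ℝ) : ℤ → ℝ := fun z => g (z + 1) - g z

/-- The auxiliary function `h`. -/
def hB (g : ℤ → ℝ) (pstar : ℝ) : ℤ → ℝ :=
  fun z => (1 / 2 - pstar) * Dop g z - (g (z + 1) + g z) / 2

lemma Dop_bound {g : ℤ → ℝ} {C : ℝ} (hg : ∀ z, |g z| ≤ C) : ∀ z, |Dop g z| ≤ 2 * C := by
  intro z
  have h1 := abs_le.mp (hg (z + 1))
  have h2 := abs_le.mp (hg z)
  rw [Dop, abs_le]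
  constructor <;> [skip; skip] <;> linarith [h1.1, h1.2, h2.1, h2.2]

lemma hB_bound {g : ℤ → ℝ} {C : ℝ} (pstar : ℝ) (hg : ∀ z, |g z| ≤ C) :
    ∀ z, |hB g pstar z| ≤ |1 / 2 - pstar| * (2 * C) + C := by
  intro z
  have h3 : |(1 / 2 - pstar) * Dop g z| ≤ |1 / 2 - pstar| * (2 * C) := by
    rw [abs_mul]
    exact mul_le_mul_of_nonneg_left (Dop_bound hg z) (abs_nonneg _)
  have h4 : |(g (z + 1) + g z) / 2| ≤ C := by
    have h1 := abs_le.mp (hg (z + 1))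
    have h2 := abs_le.mp (hg z)
    rw [abs_le]
    constructor <;> linarith [h1.1, h1.2, h2.1, h2.2]
  rw [hB, sub_eq_add_neg]
  refine (abs_add_le _ _).trans ?_
  rw [abs_neg]
  linarith

lemma hB_diff (g : ℤ → ℝ) (pstar : ℝ) (z : ℤ) :
    hB g pstar (z + 1) - hB g pstar z = -pstar * Dop (Dop g) z - Dop g z := by
  simp only [hB, Dop]
  ring

lemma Dop3_eq (g : ℤ → ℝ) (z : ℤ) :
    Dop (Dop (Dop g)) z = g (z + 3) - 3 * g (z + 2) + 3 * g (z + 1) - g z := by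
  simp only [Dop]
  rw [show z + 1 + 1 + 1 = z + 3 by ring, show z + 1 + 1 = z + 2 by ring]
  ring

variable {Ω : Type*} [MeasureSpace Ω] [IsProbabilityMeasure (ℙ : Measure Ω)]

lemma aux_int_bdd {f : Ω → ℝ} (hf : Measurable f) {C : ℝ} (hC : ∀ ω, |f ω| ≤ C) :
    Integrable f ℙ :=
  (integrable_const C).mono' hf.aestronglyMeasurable
    (ae_of_all _ fun ω => by simpa [Real.norm_eq_abs] using hC ω)

lemma aux_meas_comp {V : Ω → ℤ} (hV : Measurable V) (f : ℤ → ℝ) :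
    Measurable fun ω => f (V ω) := (measurable_of_countable f).comp hV

lemma aux_int_comp {V : Ω → ℤ} (hV : Measurable V) (f : ℤ → ℝ) {C : ℝ}
    (hf : ∀ z, |f z| ≤ C) : Integrable (fun ω => f (V ω)) ℙ :=
  aux_int_bdd (aux_meas_comp hV f) fun ω => hf _

lemma aux_integral_xi {ξ : Ω → ℤ} (hξ : Measurable ξ) (h01 : ∀ ω, ξ ω = 0 ∨ ξ ω = 1)
    {pi : ℝ} (hpi : (ℙ {ω | ξ ω = 1}).toReal = pi) :
    ∫ ω, (ξ ω : ℝ) ∂ℙ = pi := by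
  have heq : (fun ω => (ξ ω : ℝ)) = Set.indicator {ω | ξ ω = 1} fun _ => (1 : ℝ) := by
    funext ω
    rcases h01 ω with h | h <;> simp [Set.indicator_apply, h]
  have hms : MeasurableSet {ω | ξ ω = 1} := hξ (measurableSet_singleton 1)
  rw [heq, integral_indicator_const (1 : ℝ) hms]
  simp only [smul_eq_mul, mul_one]; exact hpi

lemma aux_mul_indep {ξ V : Ω → ℤ} (hξ : Measurable ξ) (hV : Measurable V)
    (hind : IndepFun ξ V ℙ) (h01 : ∀ ω, ξ ω = 0 ∨ ξ ω = 1)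
    {pi : ℝ} (hpi : (ℙ {ω | ξ ω = 1}).toReal = pi) (f : ℤ → ℝ) :
    ∫ ω, (ξ ω : ℝ) * f (V ω) ∂ℙ = pi * ∫ ω, f (V ω) ∂ℙ := by
  have h1 : IndepFun (fun ω => (ξ ω : ℝ)) (fun ω => f (V ω)) ℙ :=
    hind.comp (measurable_of_countable _) (measurable_of_countable f)
  have h2 := h1.integral_mul_eq_mul_integral
    ((measurable_of_countable (fun z : ℤ => (z : ℝ))).comp hξ).aestronglyMeasurable
    (aux_meas_comp hV f).aestronglyMeasurable
  simp only [Pi.mul_apply] at h2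
  rw [h2, aux_integral_xi hξ h01 hpi]

lemma aux_xi_abs {ξ : Ω → ℤ} (h01 : ∀ ω, ξ ω = 0 ∨ ξ ω = 1) (ω : Ω) : |(ξ ω : ℝ)| ≤ 1 := by
  rcases h01 ω with h | h <;> simp [h]

lemma aux_key_one {ξ V : Ω → ℤ} (hξ : Measurable ξ) (hV : Measurable V)
    (hind : IndepFun ξ V ℙ) (h01 : ∀ ω, ξ ω = 0 ∨ ξ ω = 1)
    {pi : ℝ} (hpi : (ℙ {ω | ξ ω = 1}).toReal = pi)
    (f : ℤ → ℝ) {C : ℝ} (hf : ∀ z, |f z| ≤ C) :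
    ∫ ω, f (V ω + ξ ω) ∂ℙ
      = ∫ ω, f (V ω) ∂ℙ + pi * ∫ ω, (f (V ω + 1) - f (V ω)) ∂ℙ := by
  have hpt : ∀ ω, f (V ω + ξ ω) = f (V ω) + (ξ ω : ℝ) * (f (V ω + 1) - f (V ω)) := by
    intro ω
    rcases h01 ω with h | h <;> simp [h]
  have hint2 : Integrable (fun ω => (ξ ω : ℝ) * (f (V ω + 1) - f (V ω))) ℙ := by
    refine aux_int_bdd (((measurable_of_countable _).comp hξ).mul
      (aux_meas_comp hV (fun z => f (z + 1) - f z))) (C := 2 * C) fun ω => ?_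
    have h1 := aux_xi_abs h01 ω
    have h2 : |f (V ω + 1) - f (V ω)| ≤ 2 * C := Dop_bound hf (V ω)
    calc |(ξ ω : ℝ) * (f (V ω + 1) - f (V ω))| = |(ξ ω : ℝ)| * |f (V ω + 1) - f (V ω)| :=
          abs_mul _ _
      _ ≤ 1 * (2 * C) := mul_le_mul h1 h2 (abs_nonneg _) zero_le_one
      _ = 2 * C := one_mul _
  simp only [hpt]
  rw [integral_add (aux_int_comp hV f hf) hint2]
  have h3 : ∫ ω, (ξ ω : ℝ) * (f (V ω + 1) - f (V ω)) ∂ℙ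
      = pi * ∫ ω, (f (V ω + 1) - f (V ω)) ∂ℙ :=
    aux_mul_indep hξ hV hind h01 hpi (fun z => f (z + 1) - f z)
  rw [h3]

lemma aux_key_two {ξ V : Ω → ℤ} (hξ : Measurable ξ) (hV : Measurable V)
    (hind : IndepFun ξ V ℙ) (h01 : ∀ ω, ξ ω = 0 ∨ ξ ω = 1)
    {pi : ℝ} (hpi : (ℙ {ω | ξ ω = 1}).toReal = pi)
    (f : ℤ → ℝ) {C : ℝ} (hf : ∀ z, |f z| ≤ C) :
    ∫ ω, ((ξ ω : ℝ) - pi) * f (V ω + ξ ω) ∂ℙ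
      = pi * (1 - pi) * ∫ ω, (f (V ω + 1) - f (V ω)) ∂ℙ := by
  have hpt : ∀ ω, ((ξ ω : ℝ) - pi) * f (V ω + ξ ω)
      = (ξ ω : ℝ) * f (V ω + 1) - pi * f (V ω + ξ ω) := by
    intro ω
    rcases h01 ω with h | h <;> simp [h] <;> ring
  have I1 : Integrable (fun ω => (ξ ω : ℝ) * f (V ω + 1)) ℙ := by
    refine aux_int_bdd (((measurable_of_countable _).comp hξ).mul
      (aux_meas_comp hV (fun z => f (z + 1)))) (C := C) fun ω => ?_
    have h1 := aux_xi_abs h01 ω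
    have h2 := hf (V ω + 1)
    have hC0 : 0 ≤ C := (abs_nonneg _).trans h2
    calc |(ξ ω : ℝ) * f (V ω + 1)| = |(ξ ω : ℝ)| * |f (V ω + 1)| := abs_mul _ _
      _ ≤ 1 * C := mul_le_mul h1 h2 (abs_nonneg _) zero_le_one
      _ = C := one_mul _
  have I2 : Integrable (fun ω => pi * f (V ω + ξ ω)) ℙ :=
    (aux_int_comp (hV.add hξ) f hf).const_mul pi
  simp only [hpt]
  rw [integral_sub I1 I2]
  have h3 : ∫ ω, (ξ ω : ℝ) * f (V ω + 1) ∂ℙ = pi * ∫ ω, f (V ω + 1) ∂ℙ :=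
    aux_mul_indep hξ hV hind h01 hpi (fun z => f (z + 1))
  have h4 := aux_key_one hξ hV hind h01 hpi f hf
  rw [integral_const_mul, h3, h4]
  have h5 : ∫ ω, (f (V ω + 1) - f (V ω)) ∂ℙ
      = (∫ ω, f (V ω + 1) ∂ℙ) - ∫ ω, f (V ω) ∂ℙ :=
    integral_sub (aux_int_comp hV (fun z => f (z + 1)) (fun z => hf (z + 1)))
      (aux_int_comp hV f hf)
  rw [h5]
  ring

lemma aux_T1 {ξ V S : Ω → ℤ} (hξ : Measurable ξ) (hV : Measurable V)
    (hind : IndepFun ξ V ℙ) (h01 : ∀ ω, ξ ω = 0 ∨ ξ ω = 1)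
    {pi : ℝ} (hpi : (ℙ {ω | ξ ω = 1}).toReal = pi)
    (hS : ∀ ω, S ω = V ω + ξ ω) (g : ℤ → ℝ) (pstar : ℝ) {C : ℝ} (hg : ∀ z, |g z| ≤ C) :
    (∫ ω, ((ξ ω : ℝ) - pi) * hB g pstar (S ω) ∂ℙ)
        + pi * (1 - pi) * ∫ ω, Dop g (S ω) ∂ℙ
      = pi * (1 - pi) * (pi - pstar) * ∫ ω, Dop (Dop g) (V ω) ∂ℙ := by
  simp only [hS]
  have hA := aux_key_two hξ hV hind h01 hpi (hB g pstar) (hB_bound pstar hg)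
  have hBk : ∫ ω, Dop g (V ω + ξ ω) ∂ℙ
      = (∫ ω, Dop g (V ω) ∂ℙ) + pi * ∫ ω, Dop (Dop g) (V ω) ∂ℙ :=
    aux_key_one hξ hV hind h01 hpi (Dop g) (Dop_bound hg)
  have hd : ∫ ω, (hB g pstar (V ω + 1) - hB g pstar (V ω)) ∂ℙ
      = -pstar * (∫ ω, Dop (Dop g) (V ω) ∂ℙ) - ∫ ω, Dop g (V ω) ∂ℙ := by
    have hptd : ∀ ω, hB g pstar (V ω + 1) - hB g pstar (V ω)
        = -pstar * Dop (Dop g) (V ω) - Dop g (V ω) := fun ω => hB_diff g pstar (V ω)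
    simp only [hptd]
    rw [integral_sub ((aux_int_comp hV (Dop (Dop g)) (Dop_bound (Dop_bound hg))).const_mul _)
      (aux_int_comp hV (Dop g) (Dop_bound hg)), integral_const_mul]
  rw [hA, hd, hBk]
  ring

lemma aux_T2 {ξ V S : Ω → ℤ} (hξ : Measurable ξ) (hV : Measurable V)
    (hind : IndepFun ξ V ℙ) (h01 : ∀ ω, ξ ω = 0 ∨ ξ ω = 1)
    {pi : ℝ} (hpi : (ℙ {ω | ξ ω = 1}).toReal = pi)
    (hS : ∀ ω, S ω = V ω + ξ ω) (g : ℤ → ℝ) {C : ℝ} (hg : ∀ z, |g z| ≤ C) :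
    ∫ ω, Dop (Dop g) (V ω) ∂ℙ
      = (∫ ω, Dop (Dop g) (S ω) ∂ℙ) - pi * ∫ ω, Dop (Dop (Dop g)) (V ω) ∂ℙ := by
  simp only [hS]
  have h : ∫ ω, Dop (Dop g) (V ω + ξ ω) ∂ℙ
      = (∫ ω, Dop (Dop g) (V ω) ∂ℙ) + pi * ∫ ω, Dop (Dop (Dop g)) (V ω) ∂ℙ :=
    aux_key_one hξ hV hind h01 hpi (Dop (Dop g)) (Dop_bound (Dop_bound hg))
  rw [h]
  ring

end AuxStein

theorem stmt_8 {Ω : Type*} [MeasureSpace Ω] [IsProbabilityMeasure (ℙ : Measure Ω)]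
    (m : ℕ) (X : Fin m → Ω → ℤ) (p : Fin m → ℝ)
    (hmeas : ∀ i, Measurable (X i))
    (hind : iIndepFun X ℙ)
    (h01 : ∀ i ω, X i ω = 0 ∨ X i ω = 1)
    (hp : ∀ i, (ℙ {ω | X i ω = 1}).toReal = p i)
    (hp01 : ∀ i, p i ∈ Set.Ioo (0 : ℝ) 1)
    (l1 l2 l3 : ℝ)
    (hl1 : l1 = ∑ i, p i) (hl2 : l2 = ∑ i, (p i) ^ 2) (hl3 : l3 = ∑ i, (p i) ^ 3)
    (h12 : l1 > l2) (h23 : l2 > l3)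
    (pstar : ℝ) (hps : pstar = (l2 - l3) / (l1 - l2))
    (g : ℤ → ℝ) (hb : ∃ C, ∀ z, |g z| ≤ C) :
    ∫ ω, ((l1 - l2 + (1 / 2 - pstar) * (((∑ j, X j ω : ℤ) : ℝ) - l1))
            * (g ((∑ j, X j ω) + 1) - g (∑ j, X j ω))
          - (((∑ j, X j ω : ℤ) : ℝ) - l1)
            * (g ((∑ j, X j ω) + 1) + g (∑ j, X j ω)) / 2) ∂ℙ
      = ∑ i, (pstar - p i) * (p i) ^ 2 * (1 - p i) *
          ∫ ω, (g ((∑ j, X j ω) - X i ω + 3) - 3 * g ((∑ j, X j ω) - X i ω + 2)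
              + 3 * g ((∑ j, X j ω) - X i ω + 1) - g ((∑ j, X j ω) - X i ω)) ∂ℙ := by
  classical
  obtain ⟨C, hC⟩ := hb
  have hSmeas : Measurable fun ω => ∑ j, X j ω := Finset.measurable_sum _ fun i _ => hmeas i
  have hVmeas : ∀ i, Measurable fun ω => (∑ j, X j ω) - X i ω := fun i => hSmeas.sub (hmeas i)
  have hindep : ∀ i : Fin m, IndepFun (X i) (fun ω => (∑ j, X j ω) - X i ω) ℙ := by
    intro i
    have h := (hind.indepFun_finsetSum_of_notMem hmeas
      (Finset.notMem_erase i Finset.univ)).symm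
    have heq : (fun ω => (∑ j, X j ω) - X i ω) = ∑ j ∈ Finset.univ.erase i, X j := by
      funext ω
      simp only [Finset.sum_apply]
      rw [Finset.sum_erase_eq_sub (Finset.mem_univ i)]
    rw [heq]
    exact h
  have hT1 : ∀ i : Fin m,
      (∫ ω, ((X i ω : ℝ) - p i) * hB g pstar (∑ j, X j ω) ∂ℙ)
        + p i * (1 - p i) * ∫ ω, Dop g (∑ j, X j ω) ∂ℙ
      = p i * (1 - p i) * (p i - pstar)
          * ∫ ω, Dop (Dop g) ((∑ j, X j ω) - X i ω) ∂ℙ :=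
    fun i => aux_T1 (hmeas i) (hVmeas i) (hindep i) (h01 i) (hp i)
      (fun ω => (sub_add_cancel _ _).symm) g pstar hC
  have hT2 : ∀ i : Fin m,
      ∫ ω, Dop (Dop g) ((∑ j, X j ω) - X i ω) ∂ℙ
        = (∫ ω, Dop (Dop g) (∑ j, X j ω) ∂ℙ)
          - p i * ∫ ω, Dop (Dop (Dop g)) ((∑ j, X j ω) - X i ω) ∂ℙ := fun i =>
    aux_T2 (hmeas i) (hVmeas i) (hindep i) (h01 i) (hp i)
      (fun ω => (sub_add_cancel _ _).symm) g hC
  have hRHS : ∀ i : Fin m,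
      ∫ ω, (g ((∑ j, X j ω) - X i ω + 3) - 3 * g ((∑ j, X j ω) - X i ω + 2)
          + 3 * g ((∑ j, X j ω) - X i ω + 1) - g ((∑ j, X j ω) - X i ω)) ∂ℙ
        = ∫ ω, Dop (Dop (Dop g)) ((∑ j, X j ω) - X i ω) ∂ℙ := fun i =>
    integral_congr_ae (ae_of_all _ fun ω => (Dop3_eq g _).symm)
  have hsum : ∀ ω, ((∑ j, X j ω : ℤ) : ℝ) - l1 = ∑ i, ((X i ω : ℝ) - p i) := by
    intro ω
    rw [Finset.sum_sub_distrib, hl1]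
    push_cast
    ring
  have hpt : ∀ ω, ((l1 - l2 + (1 / 2 - pstar) * (((∑ j, X j ω : ℤ) : ℝ) - l1))
            * (g ((∑ j, X j ω) + 1) - g (∑ j, X j ω))
          - (((∑ j, X j ω : ℤ) : ℝ) - l1)
            * (g ((∑ j, X j ω) + 1) + g (∑ j, X j ω)) / 2)
      = (l1 - l2) * Dop g (∑ j, X j ω)
        + ∑ i, ((X i ω : ℝ) - p i) * hB g pstar (∑ j, X j ω) := by
    intro ω
    rw [← Finset.sum_mul, ← hsum ω]
    simp only [Dop, hB]
    ring
  have hint1 : Integrable (fun ω => (l1 - l2) * Dop g (∑ j, X j ω)) ℙ :=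
    (aux_int_comp hSmeas (Dop g) (Dop_bound hC)).const_mul _
  have hintI : ∀ i : Fin m,
      Integrable (fun ω => ((X i ω : ℝ) - p i) * hB g pstar (∑ j, X j ω)) ℙ := by
    intro i
    refine aux_int_bdd ((((measurable_of_countable _).comp (hmeas i)).sub
        measurable_const).mul (aux_meas_comp hSmeas (hB g pstar)))
      (C := (1 + |p i|) * (|1 / 2 - pstar| * (2 * C) + C)) fun ω => ?_
    have hx := aux_xi_abs (h01 i) ω
    have h1 : |(X i ω : ℝ) - p i| ≤ 1 + |p i| := by
      rw [sub_eq_add_neg]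
      refine (abs_add_le _ _).trans ?_
      rw [abs_neg]
      linarith
    have h2 := hB_bound pstar hC (∑ j, X j ω)
    rw [abs_mul]
    exact mul_le_mul h1 h2 (abs_nonneg _) (by positivity)
  have hz : ∑ i, p i * (1 - p i) * (p i - pstar) = 0 := by
    have h1 : ∑ i, p i * (1 - p i) * (p i - pstar) = (l2 - l3) - pstar * (l1 - l2) := by
      rw [hl1, hl2, hl3, ← Finset.sum_sub_distrib, ← Finset.sum_sub_distrib, Finset.mul_sum,
        ← Finset.sum_sub_distrib]
      exact Finset.sum_congr rfl fun i _ => by ring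
    have hne : l1 - l2 ≠ 0 := sub_ne_zero.mpr (ne_of_gt h12)
    rw [h1, hps, div_mul_cancel₀ _ hne]
    ring
  calc ∫ ω, ((l1 - l2 + (1 / 2 - pstar) * (((∑ j, X j ω : ℤ) : ℝ) - l1))
            * (g ((∑ j, X j ω) + 1) - g (∑ j, X j ω))
          - (((∑ j, X j ω : ℤ) : ℝ) - l1)
            * (g ((∑ j, X j ω) + 1) + g (∑ j, X j ω)) / 2) ∂ℙ
      = ∫ ω, ((l1 - l2) * Dop g (∑ j, X j ω)
          + ∑ i, ((X i ω : ℝ) - p i) * hB g pstar (∑ j, X j ω)) ∂ℙ :=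
        integral_congr_ae (ae_of_all _ hpt)
    _ = (l1 - l2) * (∫ ω, Dop g (∑ j, X j ω) ∂ℙ)
          + ∑ i, ∫ ω, ((X i ω : ℝ) - p i) * hB g pstar (∑ j, X j ω) ∂ℙ := by
        rw [integral_add hint1 (integrable_finset_sum _ fun i _ => hintI i),
          integral_const_mul, integral_finset_sum _ fun i _ => hintI i]
    _ = ∑ i, ((∫ ω, ((X i ω : ℝ) - p i) * hB g pstar (∑ j, X j ω) ∂ℙ)
          + p i * (1 - p i) * ∫ ω, Dop g (∑ j, X j ω) ∂ℙ) := by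
        rw [Finset.sum_add_distrib]
        have hl12 : l1 - l2 = ∑ i, p i * (1 - p i) := by
          rw [hl1, hl2, ← Finset.sum_sub_distrib]
          exact Finset.sum_congr rfl fun i _ => by ring
        rw [hl12, Finset.sum_mul]
        exact add_comm _ _
    _ = ∑ i, p i * (1 - p i) * (p i - pstar)
          * ∫ ω, Dop (Dop g) ((∑ j, X j ω) - X i ω) ∂ℙ :=
        Finset.sum_congr rfl fun i _ => hT1 i
    _ = ∑ i, (p i * (1 - p i) * (p i - pstar) * (∫ ω, Dop (Dop g) (∑ j, X j ω) ∂ℙ)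
          + (pstar - p i) * (p i) ^ 2 * (1 - p i)
            * ∫ ω, Dop (Dop (Dop g)) ((∑ j, X j ω) - X i ω) ∂ℙ) :=
        Finset.sum_congr rfl fun i _ => by rw [hT2 i]; ring
    _ = ∑ i, (pstar - p i) * (p i) ^ 2 * (1 - p i)
          * ∫ ω, Dop (Dop (Dop g)) ((∑ j, X j ω) - X i ω) ∂ℙ := by
        rw [Finset.sum_add_distrib, ← Finset.sum_mul, hz, zero_mul, zero_add]
    _ = ∑ i, (pstar - p i) * (p i) ^ 2 * (1 - p i) *
          ∫ ω, (g ((∑ j, X j ω) - X i ω + 3) - 3 * g ((∑ j, X j ω) - X i ω + 2)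
              + 3 * g ((∑ j, X j ω) - X i ω + 1) - g ((∑ j, X j ω) - X i ω)) ∂ℙ :=
        Finset.sum_congr rfl fun i _ => by rw [hRHS i]
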